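/- If B is a real symmetric positive semidefinite n×n matrix and C is a real symmetric positive definite n×n matrix, then tr(B C⁻¹) ≥ tr(B(2I − C)). -/

import Mathlib

open Matrix

lemma psd_trace_nonneg {n : ℕ} {A : Matrix (Fin n) (Fin n) ℝ} (hA : A.PosSemidef) :
    0 ≤ A.trace := by
  rw [Matrix.trace]
  apply Finset.sum_nonneg
  intro i _
  exact hA.diag_nonneg

lemma psd_trace_mul_nonneg {n : ℕ} {B M : Matrix (Fin n) (Fin n) ℝ}
    (hB : B.PosSemidef) (hM : M.PosSemidef) : 0 ≤ (B * M).trace := by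
  obtain ⟨A, rfl⟩ : ∃ A : Matrix (Fin n) (Fin n) ℝ, B = Aᴴ * A := by
    open scoped MatrixOrder in
    exact ⟨CFC.sqrt B, by
      rw [← Matrix.star_eq_conjTranspose, (CFC.sqrt_nonneg B).isSelfAdjoint.star_eq,
        CFC.sqrt_mul_sqrt_self B hB.nonneg]⟩
  have : (Aᴴ * A * M).trace = (A * M * Aᴴ).trace := by
    rw [Matrix.mul_assoc, Matrix.trace_mul_comm]
  rw [this]
  exact psd_trace_nonneg (hM.mul_mul_conjTranspose_same A)

theorem trace_mul_inv_ge {n : ℕ} (B C : Matrix (Fin n) (Fin n) ℝ)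
    (hB : B.PosSemidef) (hC : C.PosDef) :
    Matrix.trace (B * (2 • (1 : Matrix (Fin n) (Fin n) ℝ) - C)) ≤ Matrix.trace (B * C⁻¹) := by
  have hCu : IsUnit C.det := isUnit_iff_ne_zero.mpr (ne_of_gt hC.det_pos)
  have h1 : C * C⁻¹ = 1 := Matrix.mul_nonsing_inv C hCu
  have h2 : C⁻¹ * C = 1 := Matrix.nonsing_inv_mul C hCu
  have hMeq : (C - 1) * C⁻¹ * (C - 1)ᴴ = C⁻¹ - 2 • (1 : Matrix (Fin n) (Fin n) ℝ) + C := by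
    have hH : (C - 1)ᴴ = C - 1 := by
      rw [conjTranspose_sub, hC.1.eq, conjTranspose_one]
    rw [hH]
    simp only [Matrix.sub_mul, Matrix.mul_sub, Matrix.one_mul, Matrix.mul_one, h1, h2]
    abel
  have hM : (C⁻¹ - 2 • (1 : Matrix (Fin n) (Fin n) ℝ) + C).PosSemidef := by
    rw [← hMeq]
    exact (hC.inv.posSemidef).mul_mul_conjTranspose_same (C - 1)
  have key := psd_trace_mul_nonneg hB hM
  have : B * (C⁻¹ - 2 • (1 : Matrix (Fin n) (Fin n) ℝ) + C)
      = B * C⁻¹ - B * (2 • (1 : Matrix (Fin n) (Fin n) ℝ) - C) := by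
    rw [Matrix.mul_sub, Matrix.mul_add, Matrix.mul_sub]
    abel
  rw [this, Matrix.trace_sub, sub_nonneg] at key
  exact key
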